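/- For every real r > 0 with r ≠ 1 and all real λ, μ, ν, the coloured R-matrices R_r^{λ,μ} satisfy the coloured quantum Yang–Baxter equation R₁₂^{λ,μ} * R₁₃^{λ,ν} * R₂₃^{μ,ν} = R₂₃^{μ,ν} * R₁₃^{λ,ν} * R₁₂^{λ,μ}. -/
import Mathlib


noncomputable section

open Matrix Real

/-- The coloured `R`-matrix `R_r^{λ,μ}` of the coloured quantum group `GL_r^{λ,μ}(2)`,
indexed by `Fin 2 × Fin 2` (indices `0,1` correspond to the paper's `1,2`);
the powers of `r` are real powers. -/
def RcolQ (r l μ : ℝ) : Matrix (Fin 2 × Fin 2) (Fin 2 × Fin 2) ℝ :=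
  fun p q =>
    if p = (0, 0) ∧ q = (0, 0) then r ^ (1 - (l - μ))
    else if p = (0, 1) ∧ q = (0, 1) then r ^ (l + μ)
    else if p = (0, 1) ∧ q = (1, 0) then r - r⁻¹
    else if p = (1, 0) ∧ q = (1, 0) then r ^ (-(l + μ))
    else if p = (1, 1) ∧ q = (1, 1) then r ^ (1 + (l - μ))
    else 0

/-- Leg embedding `R₁₂` acting on the first two tensor factors. -/
def leg12 {n : ℕ} (R : Matrix (Fin n × Fin n) (Fin n × Fin n) ℝ) :
    Matrix (Fin n × Fin n × Fin n) (Fin n × Fin n × Fin n) ℝ :=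
  fun p q => if p.2.2 = q.2.2 then R (p.1, p.2.1) (q.1, q.2.1) else 0

/-- Leg embedding `R₁₃` acting on the first and third tensor factors. -/
def leg13 {n : ℕ} (R : Matrix (Fin n × Fin n) (Fin n × Fin n) ℝ) :
    Matrix (Fin n × Fin n × Fin n) (Fin n × Fin n × Fin n) ℝ :=
  fun p q => if p.2.1 = q.2.1 then R (p.1, p.2.2) (q.1, q.2.2) else 0

/-- Leg embedding `R₂₃` acting on the last two tensor factors. -/
def leg23 {n : ℕ} (R : Matrix (Fin n × Fin n) (Fin n × Fin n) ℝ) :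
    Matrix (Fin n × Fin n × Fin n) (Fin n × Fin n × Fin n) ℝ :=
  fun p q => if p.1 = q.1 then R (p.2.1, p.2.2) (q.2.1, q.2.2) else 0

set_option maxHeartbeats 4000000 in
/-- the coloured `R`-matrices `R_r^{λ,μ}` satisfy the coloured quantum
Yang–Baxter equation. -/
theorem RcolQ_CQYBE (r : ℝ) (hr : 0 < r) (hr1 : r ≠ 1) (l μ ν : ℝ) :
    leg12 (RcolQ r l μ) * leg13 (RcolQ r l ν) * leg23 (RcolQ r μ ν) =
      leg23 (RcolQ r μ ν) * leg13 (RcolQ r l ν) * leg12 (RcolQ r l μ) := by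
  obtain ⟨t, rfl⟩ : ∃ t, r = exp t := ⟨Real.log r, (Real.exp_log hr).symm⟩
  ext ⟨i, j, k⟩ ⟨i', j', k'⟩
  simp only [mul_apply, Fintype.sum_prod_type, Fin.sum_univ_two, leg12, leg13, leg23, RcolQ]
  fin_cases i <;> fin_cases j <;> fin_cases k <;> fin_cases i' <;> fin_cases j' <;> fin_cases k' <;>
    norm_num [Prod.ext_iff] <;>
    simp only [← Real.exp_neg, Real.rpow_def_of_pos (Real.exp_pos t), Real.log_exp, sub_mul, mul_sub, ← Real.exp_add] <;>
    ring_nf
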